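/- Let X be a second-countable metric space, μ a finite measure on the Borel σ-algebra of X, and φ : ℝ × X → X a jointly continuous flow (φ(0,p) = p and φ(s+t,p) = φ(s,φ(t,p)) for all s,t ∈ ℝ, p ∈ X) such that for every t ∈ ℝ the map φ(t,·) preserves μ. Then for μ-almost every p ∈ X there exist sequences tₙ → +∞ and sₙ → −∞ with φ(tₙ,p) → p and φ(sₙ,p) → p; that is, p lies in both the ω-limit set and the α-limit set of its own orbit. -/

import Mathlib

open Set Filter Topology MeasureTheory

private lemma flow_iterate {X : Type*} (φ : ℝ × X → X)
    (h0 : ∀ p : X, φ (0, p) = p)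
    (hadd : ∀ s t : ℝ, ∀ p : X, φ (s + t, p) = φ (s, φ (t, p)))
    (c : ℝ) (n : ℕ) (p : X) : (fun q => φ (c, q))^[n] p = φ (n * c, p) := by
  induction n with
  | zero => simp [h0]
  | succ n ih =>
      rw [Function.iterate_succ_apply', ih, ← hadd]
      congr 1
      push_cast
      ring

private lemma recur_seq {X : Type*} [MetricSpace X] [SecondCountableTopology X]
    [MeasurableSpace X] [BorelSpace X]
    (μ : Measure X) [IsFiniteMeasure μ]
    (φ : ℝ × X → X) (hcont : Continuous φ)
    (h0 : ∀ p : X, φ (0, p) = p)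
    (hadd : ∀ s t : ℝ, ∀ p : X, φ (s + t, p) = φ (s, φ (t, p)))
    (hpres : ∀ t : ℝ, MeasurePreserving (fun p => φ (t, p)) μ μ) (c : ℝ) :
    ∀ᵐ p ∂μ, ∃ m : ℕ → ℕ, Tendsto m atTop atTop ∧
        Tendsto (fun n => φ ((m n : ℝ) * c, p)) atTop (𝓝 p) := by
  have hc : Conservative (fun q => φ (c, q)) μ := (hpres c).conservative
  filter_upwards [hc.ae_frequently_mem_of_mem_nhds] with p hp
  have key : ∀ k : ℕ, ∃ n : ℕ, k ≤ n ∧ φ ((n : ℝ) * c, p) ∈ Metric.ball p (1 / (k + 1)) := by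
    intro k
    have := (hp (Metric.ball p (1 / (k + 1)))
      (Metric.ball_mem_nhds p (by positivity))).and_eventually (eventually_ge_atTop k)
    rcases this.exists with ⟨n, hn1, hn2⟩
    exact ⟨n, hn2, by rwa [flow_iterate φ h0 hadd c n p] at hn1⟩
  choose m hm1 hm2 using key
  refine ⟨m, tendsto_atTop_mono hm1 tendsto_id, ?_⟩
  rw [tendsto_iff_dist_tendsto_zero]
  refine squeeze_zero (fun n => dist_nonneg) (fun n => le_of_lt (hm2 n)) ?_
  exact tendsto_one_div_add_atTop_nhds_zero_nat

/-- Poincaré recurrence for two-sided flows: if `φ` is a jointly continuous measure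
preserving flow on a second-countable metric space equipped with a finite Borel measure
`μ`, then `μ`-almost every point `p` lies in both its own `ω`-limit set and its own
`α`-limit set: there are sequences `tₙ → +∞` and `sₙ → -∞` along which the orbit of `p`
returns to `p`. -/
theorem ae_mem_omega_and_alpha_limit_of_flow
    {X : Type*} [MetricSpace X] [SecondCountableTopology X]
    [MeasurableSpace X] [BorelSpace X]
    (μ : Measure X) [IsFiniteMeasure μ]
    (φ : ℝ × X → X) (hcont : Continuous φ)
    (h0 : ∀ p : X, φ (0, p) = p)
    (hadd : ∀ s t : ℝ, ∀ p : X, φ (s + t, p) = φ (s, φ (t, p)))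
    (hpres : ∀ t : ℝ, MeasurePreserving (fun p => φ (t, p)) μ μ) :
    ∀ᵐ p ∂μ,
      (∃ t : ℕ → ℝ, Tendsto t atTop atTop ∧
          Tendsto (fun n => φ (t n, p)) atTop (𝓝 p)) ∧
      (∃ s : ℕ → ℝ, Tendsto s atTop atBot ∧
          Tendsto (fun n => φ (s n, p)) atTop (𝓝 p)) := by
  filter_upwards [recur_seq μ φ hcont h0 hadd hpres 1,
    recur_seq μ φ hcont h0 hadd hpres (-1)] with p hp hm
  obtain ⟨m, hm1, hm2⟩ := hp
  obtain ⟨m', hm1', hm2'⟩ := hm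
  constructor
  · refine ⟨fun n => (m n : ℝ) * 1, ?_, hm2⟩
    simpa [Function.comp_def] using tendsto_natCast_atTop_atTop.comp hm1
  · refine ⟨fun n => (m' n : ℝ) * (-1), ?_, hm2'⟩
    simp only [mul_neg_one]
    exact tendsto_neg_atBot_iff.mpr (tendsto_natCast_atTop_atTop.comp hm1')
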